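/- The sequence M₂(n) = n·(Γ(n)/(e^{-n}n^n) + e^{-Γ(n)/(e^{-n}n^n)} − 1) is monotonically increasing in n for natural numbers n ≥ 1, with M₂(1) < 2 and M₂(2) > 2; hence M₂(n) > 2 for all n ≥ 2. -/

import Mathlib

open Real Filter

namespace Stmt8Aux

noncomputable def Aq (n : ℕ) : ℝ := Real.Gamma n / (Real.exp (-(n:ℝ)) * (n:ℝ)^n)
noncomputable def Mq (n : ℕ) : ℝ := (n:ℝ) * (Aq n + Real.exp (-(Aq n)) - 1)

theorem expTaylor (x : ℝ) (h0 : 0 ≤ x) (h1 : x ≤ 1) :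
    Real.exp x ≤ 1 + x + x^2/2 + x^3/6 + x^4/24 + x^5/100 := by
  have h := Real.exp_bound' h0 h1 (n := 5) (by norm_num)
  rw [Finset.sum_range_succ, Finset.sum_range_succ, Finset.sum_range_succ,
    Finset.sum_range_succ, Finset.sum_range_succ, Finset.sum_range_zero] at h
  norm_num [Nat.factorial] at h
  nlinarith [h]

theorem polykey (x : ℝ) (h0 : 0 ≤ x) (h1 : x ≤ 19/20) :
    (1 + x + x^2/2 + x^3/6 + x^4/24 + x^5/100)^2 * (1 - x + 4*x^2/13) ≤ 1 + x + 4*x^2/13 := by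
  have hid : (1 + x + 4*x^2/13) - (1 + x + x^2/2 + x^3/6 + x^4/24 + x^5/100)^2 * (1 - x + 4*x^2/13)
      = x^3 * (2/39 + 2/39*x - 53/3900*x^2 - 23/936*x^3 - 41/2340*x^4 - 181/20800*x^5
          - 583/187200*x^6 - 967/1170000*x^7 - 61/390000*x^8 - 1/32500*x^9) := by
    ring
  have hone : x ≤ 1 := h1.trans (by norm_num)
  have hp : ∀ k : ℕ, 2 ≤ k → x^k ≤ x^2 := fun k hk => pow_le_pow_of_le_one h0 hone hk
  have h3 := hp 3 (by norm_num); have h4 := hp 4 (by norm_num); have h5 := hp 5 (by norm_num)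
  have h6 := hp 6 (by norm_num); have h7 := hp 7 (by norm_num); have h8 := hp 8 (by norm_num)
  have h9 := hp 9 (by norm_num)
  have hx2 : x^2 ≤ (19/20)*x := by nlinarith
  have hQ : 0 ≤ 2/39 + 2/39*x - 53/3900*x^2 - 23/936*x^3 - 41/2340*x^4 - 181/20800*x^5
          - 583/187200*x^6 - 967/1170000*x^7 - 61/390000*x^8 - 1/32500*x^9 := by
    nlinarith [hx2, h3, h4, h5, h6, h7, h8, h9, h0, sq_nonneg x]
  nlinarith [mul_nonneg (pow_nonneg h0 3) hQ, hid]

theorem L1 (a : ℝ) (h0 : 0 ≤ a) (h1 : a ≤ 19/10) :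
    Real.exp a * (1 - a/2 + a^2/13) ≤ 1 + a/2 + a^2/13 := by
  set x := a/2 with hx
  have hx0 : 0 ≤ x := by positivity
  have hx1 : x ≤ 19/20 := by rw [hx]; linarith
  have hE : Real.exp x ≤ 1 + x + x^2/2 + x^3/6 + x^4/24 + x^5/100 :=
    expTaylor x hx0 (hx1.trans (by norm_num))
  have hea : Real.exp a = Real.exp x * Real.exp x := by
    rw [← Real.exp_add]; ring_nf; congr 1; linarith [hx]
  have hR : (0:ℝ) ≤ 1 - x + 4*x^2/13 := by nlinarith [sq_nonneg (x - 13/8)]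
  have hPnn : (0:ℝ) ≤ 1 + x + x^2/2 + x^3/6 + x^4/24 + x^5/100 := by positivity
  have hsq : Real.exp a ≤ (1 + x + x^2/2 + x^3/6 + x^4/24 + x^5/100)^2 := by
    rw [hea]
    calc Real.exp x * Real.exp x ≤ (1 + x + x^2/2 + x^3/6 + x^4/24 + x^5/100) *
        (1 + x + x^2/2 + x^3/6 + x^4/24 + x^5/100) :=
          mul_le_mul hE hE (Real.exp_nonneg x) hPnn
      _ = _ := by ring
  have key := polykey x hx0 hx1
  have h2 : (1 - a/2 + a^2/13) = 1 - x + 4*x^2/13 := by rw [hx]; ring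
  have h3 : (1 + a/2 + a^2/13) = 1 + x + 4*x^2/13 := by rw [hx]; ring
  rw [h2, h3]
  calc Real.exp a * (1 - x + 4*x^2/13)
      ≤ (1 + x + x^2/2 + x^3/6 + x^4/24 + x^5/100)^2 * (1 - x + 4*x^2/13) :=
        mul_le_mul_of_nonneg_right hsq hR
    _ ≤ _ := key

theorem L2 (a : ℝ) (h0 : 0 < a) (h1 : a ≤ 19/10) :
    (1/2 + a/13) * (a * (1 - Real.exp (-a))) ≤ a + Real.exp (-a) - 1 := by
  have h := L1 a h0.le h1
  have hu : Real.exp (-a) * Real.exp a = 1 := by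
    rw [← Real.exp_add]; simp
  have hup : 0 < Real.exp (-a) := Real.exp_pos _
  nlinarith [mul_le_mul_of_nonneg_left h hup.le, hu]

theorem L3 (n : ℕ) (a b : ℝ) (hba : b < a)
    (h : ((n:ℝ)+1) * ((a - b) * (1 - Real.exp (-a))) ≤ a + Real.exp (-a) - 1) :
    (n:ℝ) * (a + Real.exp (-a) - 1) < ((n:ℝ)+1) * (b + Real.exp (-b) - 1) := by
  have hkey : Real.exp (-a) * (1 + (a - b)) < Real.exp (-b) := by
    have := Real.add_one_lt_exp (x := a - b) (by linarith)
    calc Real.exp (-a) * (1 + (a-b)) < Real.exp (-a) * Real.exp (a-b) :=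
      mul_lt_mul_of_pos_left (by linarith) (Real.exp_pos _)
    _ = Real.exp (-b) := by rw [← Real.exp_add]; ring_nf
  have hfb : b + Real.exp (-b) - 1 > (a + Real.exp (-a) - 1) - (a - b) * (1 - Real.exp (-a)) := by
    nlinarith [hkey]
  have hn1 : (0:ℝ) < (n:ℝ)+1 := by positivity
  nlinarith [mul_lt_mul_of_pos_left hfb hn1, h]

theorem exp_root_lt (n : ℕ) (hn : 1 ≤ n) :
    Real.exp (1/((n:ℝ)+1)) < ((n:ℝ)+1)/n := by
  have hnp : (0:ℝ) < n := by exact_mod_cast hn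
  have hne : -(1/((n:ℝ)+1)) ≠ 0 := by
    simp only [ne_eq, neg_eq_zero, div_eq_zero_iff, one_ne_zero, false_or]
    positivity
  have hs : 1 - 1/((n:ℝ)+1) < Real.exp (-(1/((n:ℝ)+1))) := by
    have := Real.add_one_lt_exp hne; linarith
  have hpos : (0:ℝ) < 1 - 1/((n:ℝ)+1) := by
    rw [sub_pos, div_lt_one (by positivity)]; linarith
  have h2 : Real.exp (1/((n:ℝ)+1)) = (Real.exp (-(1/((n:ℝ)+1))))⁻¹ := by
    rw [← Real.exp_neg]; ring_nf
  rw [h2]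
  have heq : 1 - 1/((n:ℝ)+1) = (n:ℝ)/((n:ℝ)+1) := by field_simp; ring
  rw [heq] at hs
  have := inv_strictAnti₀ (by positivity : (0:ℝ) < (n:ℝ)/((n:ℝ)+1)) hs
  simpa [inv_div] using this

theorem exp_lt_pow (n : ℕ) (hn : 1 ≤ n) :
    Real.exp 1 < (((n:ℝ)+1)/n)^(n+1) := by
  have h1 := exp_root_lt n hn
  have := pow_lt_pow_left₀ h1 (Real.exp_nonneg _) (by positivity : n+1 ≠ 0)
  rwa [← Real.exp_nat_mul, show ((n+1:ℕ):ℝ) * (1/((n:ℝ)+1)) = 1 by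
    push_cast; field_simp] at this

theorem r_lt_one (n : ℕ) (hn : 1 ≤ n) :
    Real.exp 1 * (n:ℝ)^(n+1) / ((n:ℝ)+1)^(n+1) < 1 := by
  have hnp : (0:ℝ) < n := by exact_mod_cast hn
  have h := exp_lt_pow n hn
  rw [div_pow] at h
  rw [div_lt_one (by positivity)]
  have hne : (n:ℝ)^(n+1) > 0 := by positivity
  calc Real.exp 1 * (n:ℝ)^(n+1) < (((n:ℝ)+1)^(n+1) / (n:ℝ)^(n+1)) * (n:ℝ)^(n+1) :=
        mul_lt_mul_of_pos_right h hne
    _ = ((n:ℝ)+1)^(n+1) := by field_simp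

theorem root_pade (n : ℕ) (hn : 1 ≤ n) :
    1 + 1/(n:ℝ) ≤ Real.exp ((2*(n:ℝ)+1)/(2*n*((n:ℝ)+1))) := by
  have hnp : (0:ℝ) < n := by exact_mod_cast hn
  set s : ℝ := (2*(n:ℝ)+1)/(2*n*((n:ℝ)+1)) with hs
  have hs0 : 0 ≤ s := by positivity
  have hq := Real.quadratic_le_exp_of_nonneg hs0
  have hdiff : s + s^2/2 - 1/(n:ℝ) = 1/(8*(n:ℝ)^2*((n:ℝ)+1)^2) := by
    rw [hs]; field_simp; ring
  have hpos : (0:ℝ) < 1/(8*(n:ℝ)^2*((n:ℝ)+1)^2) := by positivity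
  linarith

theorem r_ge (n : ℕ) (hn : 1 ≤ n) :
    Real.exp (-(1/(2*(n:ℝ)))) ≤ Real.exp 1 * (n:ℝ)^(n+1) / ((n:ℝ)+1)^(n+1) := by
  have hnp : (0:ℝ) < n := by exact_mod_cast hn
  have h1 := root_pade n hn
  have h2 : (((n:ℝ)+1)/n)^(n+1) ≤ Real.exp ((2*(n:ℝ)+1)/(2*n)) := by
    have hb : ((n:ℝ)+1)/n = 1 + 1/n := by field_simp
    have := pow_le_pow_left₀ (by positivity : (0:ℝ) ≤ ((n:ℝ)+1)/n) (hb ▸ h1) (n+1)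
    refine this.trans (le_of_eq ?_)
    rw [← Real.exp_nat_mul]
    congr 1
    push_cast
    field_simp
  have h3 : Real.exp 1 * (n:ℝ)^(n+1) / ((n:ℝ)+1)^(n+1) = Real.exp 1 / (((n:ℝ)+1)/n)^(n+1) := by
    rw [div_pow]; field_simp
  rw [h3, le_div_iff₀ (by positivity)]
  calc Real.exp (-(1/(2*(n:ℝ)))) * (((n:ℝ)+1)/n)^(n+1)
      ≤ Real.exp (-(1/(2*(n:ℝ)))) * Real.exp ((2*(n:ℝ)+1)/(2*n)) :=
        mul_le_mul_of_nonneg_left h2 (Real.exp_nonneg _)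
    _ = Real.exp 1 := by rw [← Real.exp_add]; congr 1; field_simp; ring

theorem Aq_fact (k : ℕ) : Aq (k+1) = (k.factorial : ℝ) * Real.exp (k+1) / ((k:ℝ)+1)^(k+1) := by
  unfold Aq
  have h1 : Real.Gamma ((k+1:ℕ):ℝ) = (k.factorial:ℝ) := by
    exact_mod_cast Real.Gamma_nat_eq_factorial k
  rw [h1, Real.exp_neg]
  push_cast
  rw [div_eq_div_iff (by positivity) (by positivity)]
  field_simp

theorem stirling_lower (m : ℕ) (hm : 1 ≤ m) :
    Real.sqrt (2*Real.pi*m) * ((m:ℝ)/Real.exp 1)^m ≤ (m.factorial : ℝ) := by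
  obtain ⟨k, rfl⟩ := Nat.exists_eq_add_of_le hm
  have ht : Tendsto (Stirling.stirlingSeq ∘ Nat.succ) atTop (nhds (Real.sqrt Real.pi)) :=
    Stirling.tendsto_stirlingSeq_sqrt_pi.comp (tendsto_add_atTop_nat 1)
  have h := Stirling.stirlingSeq'_antitone.le_of_tendsto ht k
  simp only [Function.comp] at h
  have h2 : Real.sqrt Real.pi ≤ Stirling.stirlingSeq (1 + k) := by
    rwa [Nat.succ_eq_add_one, Nat.add_comm k 1] at h
  unfold Stirling.stirlingSeq at h2
  set n := 1 + k with hn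
  have hnp : (0:ℝ) < n := by positivity
  have hden : 0 < Real.sqrt (2*(n:ℝ)) * ((n:ℝ)/Real.exp 1)^n := by positivity
  rw [le_div_iff₀ hden] at h2
  calc Real.sqrt (2*Real.pi*n) * ((n:ℝ)/Real.exp 1)^n
      = Real.sqrt Real.pi * (Real.sqrt (2*(n:ℝ)) * ((n:ℝ)/Real.exp 1)^n) := by
        rw [show 2*Real.pi*(n:ℝ) = Real.pi * (2*n) by ring, Real.sqrt_mul Real.pi_pos.le]
        ring
    _ ≤ _ := h2

theorem Aq_pos (n : ℕ) (hn : 1 ≤ n) : 0 < Aq n := by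
  obtain ⟨k, rfl⟩ := Nat.exists_eq_add_of_le' hn
  rw [Aq_fact]
  positivity

theorem Aq_succ (n : ℕ) (hn : 1 ≤ n) :
    Aq (n+1) = Aq n * (Real.exp 1 * (n:ℝ)^(n+1) / ((n:ℝ)+1)^(n+1)) := by
  obtain ⟨k, rfl⟩ := Nat.exists_eq_add_of_le' hn
  rw [Aq_fact, Aq_fact]
  have h1 : ((k+1).factorial : ℝ) = ((k:ℝ)+1) * (k.factorial : ℝ) := by
    rw [Nat.factorial_succ]; push_cast; ring
  have h2 : Real.exp ((k:ℝ)+1+1) = Real.exp ((k:ℝ)+1) * Real.exp 1 := by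
    rw [← Real.exp_add]
  push_cast
  rw [h1, h2]
  field_simp
  ring

theorem Aq_sqrt (n : ℕ) (hn : 1 ≤ n) : Real.sqrt (2*Real.pi/n) ≤ Aq n := by
  obtain ⟨k, rfl⟩ := Nat.exists_eq_add_of_le' hn
  rw [Aq_fact]
  set m : ℕ := k+1 with hm
  have hmp : (0:ℝ) < m := by positivity
  have hst := stirling_lower m (by omega)
  have hcast : ((k:ℝ)+1) = (m:ℝ) := by push_cast [hm]; ring
  rw [hcast]
  have hexp : ((m:ℝ)/Real.exp 1)^m = (m:ℝ)^m / Real.exp m := by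
    rw [div_pow, ← Real.exp_nat_mul, mul_one]
  rw [hexp] at hst
  have hst2 : Real.sqrt (2*Real.pi*m) ≤ (m.factorial:ℝ) * Real.exp m / (m:ℝ)^m := by
    rw [le_div_iff₀ (by positivity)]
    calc Real.sqrt (2*Real.pi*m) * (m:ℝ)^m
        = (Real.sqrt (2*Real.pi*m) * ((m:ℝ)^m / Real.exp m)) * Real.exp m := by
          field_simp
      _ ≤ (m.factorial:ℝ) * Real.exp m :=
          mul_le_mul_of_nonneg_right hst (Real.exp_nonneg _)
  have hsq : Real.sqrt (2*Real.pi/m) = Real.sqrt (2*Real.pi*m) / m := by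
    rw [show 2*Real.pi/(m:ℝ) = (2*Real.pi*m) * ((1:ℝ)/m)^2 by field_simp,
      Real.sqrt_mul (by positivity), Real.sqrt_sq (by positivity)]
    rw [mul_one_div]
  rw [hsq]
  have hfact : (m.factorial : ℝ) = (m:ℝ) * (k.factorial : ℝ) := by
    rw [hm, Nat.factorial_succ]; push_cast; ring
  rw [hfact] at hst2
  rw [div_le_iff₀ hmp]
  calc Real.sqrt (2*Real.pi*m) ≤ (m:ℝ) * (k.factorial:ℝ) * Real.exp m / (m:ℝ)^m := hst2
    _ = (k.factorial:ℝ) * Real.exp m / (m:ℝ)^m * m := by ring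

theorem cbound (n : ℕ) (hn : 2 ≤ n) :
    ((n:ℝ)+1)*(1 - Real.exp 1 * (n:ℝ)^(n+1) / ((n:ℝ)+1)^(n+1)) ≤ 1/2 + Aq n/13 := by
  have h1 := Real.exp_one_gt_d9
  have h2 := Real.exp_one_lt_d9
  have p2 : (7.389056:ℝ) ≤ Real.exp 1 * Real.exp 1 := by nlinarith [h1]
  have p3 : (20.085536:ℝ) ≤ Real.exp 1 * Real.exp 1 * Real.exp 1 := by nlinarith [h1, p2]
  have p4 : (54.598150:ℝ) ≤ Real.exp 1 * Real.exp 1 * Real.exp 1 * Real.exp 1 := by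
    nlinarith [h1, p3]
  have p5 : (148.413159:ℝ) ≤ Real.exp 1 * Real.exp 1 * Real.exp 1 * Real.exp 1 * Real.exp 1 := by
    nlinarith [h1, p4]
  have p6 : (403.428793:ℝ)
      ≤ Real.exp 1 * Real.exp 1 * Real.exp 1 * Real.exp 1 * Real.exp 1 * Real.exp 1 := by
    nlinarith [h1, p5]
  by_cases h7 : 7 ≤ n
  case pos =>
    have hn1 : (1:ℕ) ≤ n := by omega
    have hnp : (0:ℝ) < n := by exact_mod_cast hn1
    have hr := r_ge n hn1
    have hexp : 1 - 1/(2*(n:ℝ)) ≤ Real.exp (-(1/(2*(n:ℝ)))) := by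
      have := Real.add_one_le_exp (-(1/(2*(n:ℝ)))); linarith
    have hrb : 1 - Real.exp 1 * (n:ℝ)^(n+1) / ((n:ℝ)+1)^(n+1) ≤ 1/(2*(n:ℝ)) := by
      linarith
    have hc1 : ((n:ℝ)+1)*(1 - Real.exp 1 * (n:ℝ)^(n+1) / ((n:ℝ)+1)^(n+1))
        ≤ ((n:ℝ)+1)*(1/(2*(n:ℝ))) := by
      apply mul_le_mul_of_nonneg_left hrb (by positivity)
    have hsq13 : 13/(2*(n:ℝ)) ≤ Real.sqrt (2*Real.pi/n) := by
      rw [show (13:ℝ)/(2*(n:ℝ)) = Real.sqrt ((13/(2*(n:ℝ)))^2) by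
        rw [Real.sqrt_sq (by positivity)]]
      apply Real.sqrt_le_sqrt
      have hpi := Real.pi_gt_d6
      have hn7 : (7:ℝ) ≤ n := by exact_mod_cast h7
      rw [div_pow, div_le_div_iff₀ (by positivity) (by positivity)]
      nlinarith [hpi, hn7, hnp]
    have hA := (hsq13.trans (Aq_sqrt n hn1))
    have : ((n:ℝ)+1)*(1/(2*(n:ℝ))) = 1/2 + 1/(2*(n:ℝ)) := by field_simp
    rw [this] at hc1
    have h13 : 1/(2*(n:ℝ)) ≤ Aq n / 13 := by
      have hm := div_le_div_of_nonneg_right hA (by norm_num : (0:ℝ) ≤ 13)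
      have e1 : 13/(2*(n:ℝ))/13 = 1/(2*(n:ℝ)) := by field_simp
      rwa [e1] at hm
    linarith
  case neg =>
    have h6 : n ≤ 6 := by omega
    interval_cases n
    · rw [show (2:ℕ) = 1+1 by rfl, Aq_fact]
      have he : Real.exp (((1:ℕ):ℝ)+1) = Real.exp 1 * Real.exp 1 := by
        rw [← Real.exp_add]; norm_num
      rw [he]; norm_num [Nat.factorial]; linarith [h1, p2]
    · rw [show (3:ℕ) = 2+1 by rfl, Aq_fact]
      have he : Real.exp (((2:ℕ):ℝ)+1) = Real.exp 1 * Real.exp 1 * Real.exp 1 := by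
        rw [← Real.exp_add, ← Real.exp_add]; norm_num
      rw [he]; norm_num [Nat.factorial]; linarith [h1, p3]
    · rw [show (4:ℕ) = 3+1 by rfl, Aq_fact]
      have he : Real.exp (((3:ℕ):ℝ)+1) = Real.exp 1 * Real.exp 1 * Real.exp 1 * Real.exp 1 := by
        rw [← Real.exp_add, ← Real.exp_add, ← Real.exp_add]; norm_num
      rw [he]; norm_num [Nat.factorial]; linarith [h1, p4]
    · rw [show (5:ℕ) = 4+1 by rfl, Aq_fact]
      have he : Real.exp (((4:ℕ):ℝ)+1)
          = Real.exp 1 * Real.exp 1 * Real.exp 1 * Real.exp 1 * Real.exp 1 := by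
        rw [← Real.exp_add, ← Real.exp_add, ← Real.exp_add, ← Real.exp_add]; norm_num
      rw [he]; norm_num [Nat.factorial]; linarith [h1, p5]
    · rw [show (6:ℕ) = 5+1 by rfl, Aq_fact]
      have he : Real.exp (((5:ℕ):ℝ)+1)
          = Real.exp 1 * Real.exp 1 * Real.exp 1 * Real.exp 1 * Real.exp 1 * Real.exp 1 := by
        rw [← Real.exp_add, ← Real.exp_add, ← Real.exp_add, ← Real.exp_add, ← Real.exp_add]
        norm_num
      rw [he]; norm_num [Nat.factorial]; linarith [h1, p6]

theorem Aq_two : Aq 2 = Real.exp 1 * Real.exp 1 / 4 := by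
  show Aq (1+1) = _
  rw [Aq_fact]
  have he : Real.exp (((1:ℕ):ℝ)+1) = Real.exp 1 * Real.exp 1 := by
    rw [← Real.exp_add]; norm_num
  rw [he]; norm_num [Nat.factorial]

theorem Aq_le (n : ℕ) (hn : 2 ≤ n) : Aq n ≤ 19/10 := by
  induction n, hn using Nat.le_induction with
  | base =>
    rw [Aq_two]
    nlinarith [Real.exp_one_lt_d9, Real.exp_one_gt_d9]
  | succ n hn ih =>
    have hn1 : 1 ≤ n := by omega
    rw [Aq_succ n hn1]
    have hr := r_lt_one n hn1
    have hr0 : 0 ≤ Real.exp 1 * (n:ℝ)^(n+1) / ((n:ℝ)+1)^(n+1) := by positivity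
    have hA := Aq_pos n hn1
    nlinarith

theorem step (n : ℕ) (hn : 1 ≤ n) : Mq n < Mq (n+1) := by
  unfold Mq
  have hcast : ((n+1:ℕ):ℝ) = (n:ℝ)+1 := by push_cast; ring
  rw [hcast]
  rcases Nat.lt_or_ge n 2 with h2 | h2
  · -- n = 1
    have hn1 : n = 1 := by omega
    subst hn1
    have hA1 : Aq 1 = Real.exp 1 := by
      rw [show (1:ℕ) = 0+1 by rfl, Aq_fact]
      norm_num [Nat.factorial]
    rw [hA1, show ((1:ℕ)+1 : ℕ) = 2 by rfl, Aq_two]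
    have h1 := Real.exp_one_gt_d9
    have h2 := Real.exp_one_lt_d9
    set E := Real.exp 1 with hE
    have hu : Real.exp (-2) * (E * E) = 1 := by
      rw [hE, ← Real.exp_add, ← Real.exp_add]; norm_num
    have hup : 0 < Real.exp (-2) := Real.exp_pos _
    have hw : Real.exp (-E) < Real.exp (-2) := by
      apply Real.exp_lt_exp.mpr; linarith
    have hwp : 0 < Real.exp (-E) := Real.exp_pos _
    have hv : Real.exp (-2) * (1 + (2 - E*E/4)) ≤ Real.exp (-(E*E/4)) := by
      have h := Real.add_one_le_exp (2 - E*E/4)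
      calc Real.exp (-2) * (1 + (2 - E*E/4)) ≤ Real.exp (-2) * Real.exp (2 - E*E/4) :=
            mul_le_mul_of_nonneg_left (by linarith) hup.le
        _ = Real.exp (-(E*E/4)) := by rw [← Real.exp_add]; ring_nf
    have hE2l : (7.3890560980:ℝ) < E*E := by nlinarith [h1]
    have hE2u : E*E < 7.3890560997 := by nlinarith [h1, h2]
    have huu : Real.exp (-2) < 0.1353352833 := by nlinarith [hu, hup, hE2l]
    have hul : (0.1353352832:ℝ) < Real.exp (-2) := by nlinarith [hu, hup, hE2u]
    have hv3 : (0.1560053:ℝ) ≤ Real.exp (-(E*E/4)) := by nlinarith [hv, hul, hE2u, hup]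
    push_cast
    nlinarith [hw, huu, hv3, h1, h2, hE2l]
  · -- n ≥ 2
    have hn1 : 1 ≤ n := by omega
    set a := Aq n with ha
    set r := Real.exp 1 * (n:ℝ)^(n+1) / ((n:ℝ)+1)^(n+1) with hr
    have hb : Aq (n+1) = a * r := Aq_succ n hn1
    have hap : 0 < a := Aq_pos n hn1
    have hr1 : r < 1 := r_lt_one n hn1
    have hr0 : 0 < r := by
      rw [hr]
      have hnp : (0:ℝ) < n := by exact_mod_cast hn1
      positivity
    have hba : a * r < a := by nlinarith
    have hale : a ≤ 19/10 := Aq_le n h2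
    have hexpa : Real.exp (-a) ≤ 1 := by
      rw [show (1:ℝ) = Real.exp 0 by simp]
      exact Real.exp_le_exp.mpr (by linarith)
    have hmono : 0 ≤ a * (1 - Real.exp (-a)) := by nlinarith
    have hcb := cbound n h2
    have hL2 := L2 a hap hale
    have hkey : ((n:ℝ)+1) * ((a - a*r) * (1 - Real.exp (-a))) ≤ a + Real.exp (-a) - 1 := by
      have e1 : ((n:ℝ)+1) * ((a - a*r) * (1 - Real.exp (-a)))
          = (((n:ℝ)+1)*(1-r)) * (a * (1 - Real.exp (-a))) := by ring
      rw [e1]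
      calc (((n:ℝ)+1)*(1-r)) * (a * (1 - Real.exp (-a)))
          ≤ (1/2 + a/13) * (a * (1 - Real.exp (-a))) :=
            mul_le_mul_of_nonneg_right hcb hmono
        _ ≤ a + Real.exp (-a) - 1 := hL2
    rw [hb]
    exact L3 n a (a*r) hba hkey

theorem mono (m n : ℕ) (hm : 1 ≤ m) (hmn : m < n) : Mq m < Mq n := by
  induction n, hmn using Nat.le_induction with
  | base => exact step m hm
  | succ n hn ih => exact ih.trans (step n (by omega))

theorem part2 : Mq 1 < 2 := by
  unfold Mq
  have hA1 : Aq 1 = Real.exp 1 := by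
    rw [show (1:ℕ) = 0+1 by rfl, Aq_fact]
    norm_num [Nat.factorial]
  rw [hA1]
  have h1 := Real.exp_one_gt_d9
  have h2 := Real.exp_one_lt_d9
  have hu : Real.exp (-2) * (Real.exp 1 * Real.exp 1) = 1 := by
    rw [← Real.exp_add, ← Real.exp_add]; norm_num
  have hup : 0 < Real.exp (-2) := Real.exp_pos _
  have hw : Real.exp (-Real.exp 1) < Real.exp (-2) := by
    apply Real.exp_lt_exp.mpr; linarith
  have hwp : 0 < Real.exp (-Real.exp 1) := Real.exp_pos _
  push_cast
  nlinarith [hu, hw, hup, hwp, h1, h2]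

theorem part3 : 2 < Mq 2 := by
  unfold Mq
  rw [Aq_two]
  have h1 := Real.exp_one_gt_d9
  have h2 := Real.exp_one_lt_d9
  set E := Real.exp 1 with hE
  have hu : Real.exp (-2) * (E * E) = 1 := by
    rw [hE, ← Real.exp_add, ← Real.exp_add]; norm_num
  have hup : 0 < Real.exp (-2) := Real.exp_pos _
  have hv : Real.exp (-2) * (1 + (2 - E*E/4)) ≤ Real.exp (-(E*E/4)) := by
    have h := Real.add_one_le_exp (2 - E*E/4)
    calc Real.exp (-2) * (1 + (2 - E*E/4)) ≤ Real.exp (-2) * Real.exp (2 - E*E/4) :=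
          mul_le_mul_of_nonneg_left (by linarith) hup.le
      _ = Real.exp (-(E*E/4)) := by rw [← Real.exp_add]; ring_nf
  have hE2l : (7.3890560980:ℝ) < E*E := by nlinarith [h1]
  have hE2u : E*E < 7.3890560997 := by nlinarith [h1, h2]
  have hul : (0.1353352832:ℝ) < Real.exp (-2) := by nlinarith [hu, hup, hE2u]
  have hv3 : (0.1560053:ℝ) ≤ Real.exp (-(E*E/4)) := by nlinarith [hv, hul, hE2u, hup]
  push_cast
  nlinarith [hv3, hE2l]

theorem part4 (n : ℕ) (hn : 2 ≤ n) : 2 < Mq n := by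
  rcases eq_or_lt_of_le hn with h | h
  · rw [← h]; exact part3
  · exact part3.trans (mono 2 n (by norm_num) h)

end Stmt8Aux

theorem stmt_8 :
    (∀ m n : ℕ, 1 ≤ m → m < n →
      (m : ℝ) * (Real.Gamma m / (Real.exp (-(m : ℝ)) * (m : ℝ) ^ m) +
          Real.exp (-(Real.Gamma m / (Real.exp (-(m : ℝ)) * (m : ℝ) ^ m))) - 1) <
      (n : ℝ) * (Real.Gamma n / (Real.exp (-(n : ℝ)) * (n : ℝ) ^ n) +
          Real.exp (-(Real.Gamma n / (Real.exp (-(n : ℝ)) * (n : ℝ) ^ n))) - 1)) ∧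
    ((1 : ℝ) * (Real.Gamma 1 / (Real.exp (-(1 : ℝ)) * (1 : ℝ) ^ (1 : ℕ)) +
        Real.exp (-(Real.Gamma 1 / (Real.exp (-(1 : ℝ)) * (1 : ℝ) ^ (1 : ℕ)))) - 1) < 2) ∧
    (2 < (2 : ℝ) * (Real.Gamma 2 / (Real.exp (-(2 : ℝ)) * (2 : ℝ) ^ (2 : ℕ)) +
        Real.exp (-(Real.Gamma 2 / (Real.exp (-(2 : ℝ)) * (2 : ℝ) ^ (2 : ℕ)))) - 1)) ∧
    ∀ n : ℕ, 2 ≤ n →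
      2 < (n : ℝ) * (Real.Gamma n / (Real.exp (-(n : ℝ)) * (n : ℝ) ^ n) +
          Real.exp (-(Real.Gamma n / (Real.exp (-(n : ℝ)) * (n : ℝ) ^ n))) - 1) := by
  refine ⟨fun m n hm hmn => Stmt8Aux.mono m n hm hmn, ?_, ?_,
    fun n hn => Stmt8Aux.part4 n hn⟩
  · have h := Stmt8Aux.part2
    have e : Stmt8Aux.Mq 1 = (1 : ℝ) * (Real.Gamma 1 / (Real.exp (-(1 : ℝ)) * (1 : ℝ) ^ (1 : ℕ)) +
        Real.exp (-(Real.Gamma 1 / (Real.exp (-(1 : ℝ)) * (1 : ℝ) ^ (1 : ℕ)))) - 1) := by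
      norm_num [Stmt8Aux.Mq, Stmt8Aux.Aq]
    rwa [e] at h
  · have h := Stmt8Aux.part3
    have e : Stmt8Aux.Mq 2 = (2 : ℝ) * (Real.Gamma 2 / (Real.exp (-(2 : ℝ)) * (2 : ℝ) ^ (2 : ℕ)) +
        Real.exp (-(Real.Gamma 2 / (Real.exp (-(2 : ℝ)) * (2 : ℝ) ^ (2 : ℕ)))) - 1) := by
      norm_num [Stmt8Aux.Mq, Stmt8Aux.Aq]
    rwa [e] at h
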